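/- Let 𝒜 be a finite set with a symmetric neighborhood relation assigning each A ∈ 𝒜 a set Γ(A) ⊆ 𝒜∖{A} with B ∈ Γ(A) iff A ∈ Γ(B), and write Γ⁺(A) = Γ(A) ∪ {A}. Let x : 𝒜 → (0,1) and set x'(B) = x(B)·∏_{C∈Γ(B)}(1 − x(C)). Then for every A ∈ 𝒜, the sum over all proper witness trees τ rooted at A of the weight ∏_{v ∈ V(τ)} x'([v]) is at most x(A)/(1 − x(A)). -/

import Mathlib

/-- A (rooted, vertex-labeled) witness tree over a set `𝒜` of events: a root
label together with a list of subtrees. -/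
inductive WTree (𝒜 : Type) : Type where
  | node : 𝒜 → List (WTree 𝒜) → WTree 𝒜

/-- The label of the root of a witness tree. -/
def WTree.label {𝒜 : Type} : WTree 𝒜 → 𝒜
  | .node a _ => a

mutual
  /-- The weight of a witness tree: the product of `w ([v])` over all its
  vertices `v`. -/
  def WTree.weight {𝒜 : Type} (w : 𝒜 → ℝ) : WTree 𝒜 → ℝ
    | .node a c => w a * WTree.weightList w c
  /-- Product of weights of a list of witness trees. -/
  def WTree.weightList {𝒜 : Type} (w : 𝒜 → ℝ) : List (WTree 𝒜) → ℝ
    | [] => 1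
    | t :: ts => WTree.weight w t * WTree.weightList w ts
end

/-- A witness tree is proper (w.r.t. neighborhoods `Γ`) if the children of any
vertex labeled `B` carry pairwise distinct labels from `Γ⁺(B) = {B} ∪ Γ B`.
The lists of children are canonically sorted strictly increasingly by label
(so each proper witness tree, whose children are unordered but carry distinct
labels, has exactly one representative). -/
inductive WTree.Proper {𝒜 : Type} [LinearOrder 𝒜] (Γ : 𝒜 → Finset 𝒜) : WTree 𝒜 → Prop where
  | node : ∀ (a : 𝒜) (c : List (WTree 𝒜)),
      List.Chain' (fun s t => s.label < t.label) c →
      (∀ t ∈ c, t.label ∈ insert a (Γ a)) →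
      (∀ t ∈ c, WTree.Proper Γ t) →
      WTree.Proper Γ (.node a c)

open scoped ENNReal Classical

mutual
  def WTree.depth {𝒜 : Type} : WTree 𝒜 → ℕ
    | .node _ c => WTree.depthList c + 1
  def WTree.depthList {𝒜 : Type} : List (WTree 𝒜) → ℕ
    | [] => 0
    | t :: ts => max t.depth (WTree.depthList ts)
end

mutual
  theorem WTree.weight_nonneg {𝒜 : Type} (w : 𝒜 → ℝ) (hw : ∀ a, 0 ≤ w a) :
      (t : WTree 𝒜) → 0 ≤ t.weight w
    | .node a c => by
        rw [WTree.weight]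
        exact mul_nonneg (hw a) (WTree.weightList_nonneg w hw c)
  theorem WTree.weightList_nonneg {𝒜 : Type} (w : 𝒜 → ℝ) (hw : ∀ a, 0 ≤ w a) :
      (L : List (WTree 𝒜)) → 0 ≤ WTree.weightList w L
    | [] => by rw [WTree.weightList]; norm_num
    | t :: ts => by
        rw [WTree.weightList]
        exact mul_nonneg (WTree.weight_nonneg w hw t) (WTree.weightList_nonneg w hw ts)
end

theorem WTree.depthList_le {𝒜 : Type} {n : ℕ} :
    ∀ {c : List (WTree 𝒜)}, WTree.depthList c ≤ n ↔ ∀ t ∈ c, t.depth ≤ n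
  | [] => by simp [WTree.depthList]
  | t :: ts => by
      simp [WTree.depthList, WTree.depthList_le (c := ts)]

def gwTreeEquiv (𝒜 : Type) : WTree 𝒜 ≃ 𝒜 × List (WTree 𝒜) where
  toFun t := match t with | .node a c => (a, c)
  invFun p := .node p.1 p.2
  left_inv t := by cases t; rfl
  right_inv p := rfl

theorem gw_tsum_wtree {𝒜 : Type} (f : WTree 𝒜 → ℝ≥0∞) :
    ∑' t, f t = ∑' (a : 𝒜) (c : List (WTree 𝒜)), f (.node a c) := by
  rw [← ENNReal.tsum_prod]
  exact ((gwTreeEquiv 𝒜).symm.tsum_eq f).symm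

theorem gw_tsum_list {β : Type} (f : List β → ℝ≥0∞) :
    ∑' L, f L = f [] + ∑' (t : β) (ts : List β), f (t :: ts) := by
  rw [ENNReal.tsum_eq_add_tsum_ite ([] : List β)]
  congr 1
  rw [← ENNReal.tsum_prod]
  have hinj : Function.Injective (fun p : β × List β => p.1 :: p.2) := by
    rintro ⟨a, b⟩ ⟨c, d⟩ h
    simpa using h
  have := hinj.tsum_eq (f := fun L => @ite _ (L = []) (Classical.propDecidable _) 0 (f L)) ?_
  · refine this.symm.trans ?_
    exact tsum_congr fun p => by simp
  · intro L hL
    simp only [Function.mem_support] at hL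
    rcases L with _ | ⟨t, ts⟩
    · simp at hL
    · exact ⟨(t, ts), rfl⟩

section Core

variable {𝒜 : Type} [LinearOrder 𝒜] (Γ : 𝒜 → Finset 𝒜) (x' : 𝒜 → ℝ)

/-- Sum of weights of proper witness trees rooted at `A` of depth at most `n`. -/
noncomputable def gwS (n : ℕ) (A : 𝒜) : ℝ≥0∞ :=
  ∑' τ : WTree 𝒜,
    if WTree.Proper Γ τ ∧ τ.label = A ∧ τ.depth ≤ n then ENNReal.ofReal (τ.weight x') else 0

/-- Condition on a candidate children list: sorted by labels, labels in `ℓ`,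
all subtrees proper of depth at most `n`. -/
def gwC (n : ℕ) (ℓ : List 𝒜) (L : List (WTree 𝒜)) : Prop :=
  List.Chain' (fun s t => s.label < t.label) L ∧ (∀ t ∈ L, t.label ∈ ℓ) ∧
    ∀ t ∈ L, WTree.Proper Γ t ∧ t.depth ≤ n

/-- Sum of weights of candidate children lists. -/
noncomputable def gwF (n : ℕ) (ℓ : List 𝒜) : ℝ≥0∞ :=
  ∑' L : List (WTree 𝒜), if gwC Γ n ℓ L then ENNReal.ofReal (WTree.weightList x' L) else 0

noncomputable def gwH (n : ℕ) (b : 𝒜) (ℓ : List 𝒜) : List (WTree 𝒜) → ℝ≥0∞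
  | [] => 0
  | t :: ts =>
      (if WTree.Proper Γ t ∧ t.label = b ∧ t.depth ≤ n
        then ENNReal.ofReal (t.weight x') else 0) *
      (if gwC Γ n ℓ ts then ENNReal.ofReal (WTree.weightList x' ts) else 0)

theorem gwF_nil (n : ℕ) : gwF Γ x' n [] = 1 := by
  rw [gwF, gw_tsum_list]
  have h1 : gwC Γ n [] ([] : List (WTree 𝒜)) := by
    refine ⟨List.isChain_nil, ?_, ?_⟩ <;> simp
  rw [if_pos h1]
  have h2 : ∀ (t : WTree 𝒜) (ts : List (WTree 𝒜)), ¬ gwC Γ n [] (t :: ts) := by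
    rintro t ts ⟨-, h, -⟩
    simpa using h t (by simp)
  simp only [h2, if_false]
  simp [WTree.weightList]

theorem gwF_cons (n : ℕ) (b : 𝒜) (ℓ : List 𝒜) (hb : b ∉ ℓ) (hlt : ∀ c ∈ ℓ, b < c)
    (hw : ∀ a, 0 ≤ x' a) :
    gwF Γ x' n (b :: ℓ) = (1 + gwS Γ x' n b) * gwF Γ x' n ℓ := by
  have key : ∀ L : List (WTree 𝒜),
      (if gwC Γ n (b :: ℓ) L then ENNReal.ofReal (WTree.weightList x' L) else 0) =
      (if gwC Γ n ℓ L then ENNReal.ofReal (WTree.weightList x' L) else 0) +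
      gwH Γ x' n b ℓ L := by
    haveI : IsTrans (WTree 𝒜) (fun s t : WTree 𝒜 => s.label < t.label) :=
      ⟨fun _ _ _ h h' => lt_trans h h'⟩
    intro L
    rcases L with _ | ⟨t, ts⟩
    · have h1 : gwC Γ n (b :: ℓ) ([] : List (WTree 𝒜)) := by
        refine ⟨List.isChain_nil, ?_, ?_⟩ <;> simp
      have h2 : gwC Γ n ℓ ([] : List (WTree 𝒜)) := by
        refine ⟨List.isChain_nil, ?_, ?_⟩ <;> simp
      simp [h1, h2, gwH]
    · by_cases hlab : t.label = b
      · -- head labeled b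
        have hnot : ¬ gwC Γ n ℓ (t :: ts) := by
          rintro ⟨-, h, -⟩
          exact hb (hlab ▸ h t (by simp))
        rw [if_neg hnot, zero_add, gwH]
        have hiff : gwC Γ n (b :: ℓ) (t :: ts) ↔
            (WTree.Proper Γ t ∧ t.label = b ∧ t.depth ≤ n) ∧ gwC Γ n ℓ ts := by
          constructor
          · rintro ⟨hch, hmem, hpr⟩
            have hpw := (List.isChain_iff_pairwise).1 hch
            have hts : ∀ s ∈ ts, t.label < s.label := fun s hs =>
              (List.pairwise_cons.1 hpw).1 s hs
            refine ⟨⟨(hpr t (by simp)).1, hlab, (hpr t (by simp)).2⟩,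
              hch.tail, fun s hs => ?_, fun s hs => hpr s (by simp [hs])⟩
            have := hmem s (by simp [hs])
            rcases List.mem_cons.1 this with h | h
            · exact absurd (h ▸ hts s hs) (by simp [hlab])
            · exact h
          · rintro ⟨⟨hp, -, hd⟩, hch, hmem, hpr⟩
            refine ⟨?_, ?_, ?_⟩
            · refine List.isChain_cons.2 ⟨?_, hch⟩
              intro s hs
              have hsmem : s ∈ ts := List.mem_of_mem_head? hs
              rw [hlab]
              exact hlt s.label (hmem s hsmem)
            · intro s hs
              rcases List.mem_cons.1 hs with h | h
              · simp [h, hlab]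
              · exact List.mem_cons_of_mem _ (hmem s h)
            · intro s hs
              rcases List.mem_cons.1 hs with h | h
              · exact h ▸ ⟨hp, hd⟩
              · exact hpr s h
        by_cases hc : gwC Γ n (b :: ℓ) (t :: ts)
        · obtain ⟨h1, h2⟩ := hiff.1 hc
          rw [if_pos hc, if_pos h1, if_pos h2]
          rw [WTree.weightList, ENNReal.ofReal_mul (WTree.weight_nonneg x' hw t)]
        · rw [if_neg hc]
          rcases not_and_or.1 (fun h => hc (hiff.2 h)) with h | h
          · rw [if_neg h, zero_mul]
          · rw [if_neg h, mul_zero]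
      · -- head not labeled b
        have hzero : ¬ (WTree.Proper Γ t ∧ t.label = b ∧ t.depth ≤ n) := by
          rintro ⟨-, h, -⟩; exact hlab h
        rw [gwH, if_neg hzero, zero_mul, add_zero]
        have hiff : gwC Γ n (b :: ℓ) (t :: ts) ↔ gwC Γ n ℓ (t :: ts) := by
          constructor
          · rintro ⟨hch, hmem, hpr⟩
            refine ⟨hch, fun s hs => ?_, hpr⟩
            have hpw := (List.isChain_iff_pairwise).1 hch
            have htmem : t.label ∈ ℓ := by
              rcases List.mem_cons.1 (hmem t (by simp)) with h | h
              · exact absurd h hlab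
              · exact h
            rcases List.mem_cons.1 hs with h | h
            · exact h ▸ htmem
            · have hgt : t.label < s.label := (List.pairwise_cons.1 hpw).1 s h
              rcases List.mem_cons.1 (hmem s hs) with h' | h'
              · exact absurd (h' ▸ hgt) (not_lt.2 (le_of_lt (hlt _ htmem)))
              · exact h'
          · rintro ⟨hch, hmem, hpr⟩
            exact ⟨hch, fun s hs => List.mem_cons_of_mem _ (hmem s hs), hpr⟩
        by_cases hc : gwC Γ n ℓ (t :: ts)
        · rw [if_pos (hiff.2 hc), if_pos hc]
        · rw [if_neg (fun h => hc (hiff.1 h)), if_neg hc]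
  calc gwF Γ x' n (b :: ℓ)
      = ∑' L : List (WTree 𝒜),
        ((if gwC Γ n ℓ L then ENNReal.ofReal (WTree.weightList x' L) else 0) +
        gwH Γ x' n b ℓ L) := by
        rw [gwF]; exact tsum_congr key
    _ = gwF Γ x' n ℓ + gwS Γ x' n b * gwF Γ x' n ℓ := by
        rw [ENNReal.tsum_add]
        congr 1
        rw [gw_tsum_list]
        simp only [gwH, zero_add]
        rw [gwS, gwF]
        rw [← ENNReal.tsum_mul_right]
        exact tsum_congr fun t => by rw [← ENNReal.tsum_mul_left]
    _ = (1 + gwS Γ x' n b) * gwF Γ x' n ℓ := by ring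

end Core

section More
variable {𝒜 : Type} [LinearOrder 𝒜] (Γ : 𝒜 → Finset 𝒜) (x' : 𝒜 → ℝ)

theorem gwF_sorted (n : ℕ) (hw : ∀ a, 0 ≤ x' a) :
    ∀ (ℓ : List 𝒜), List.Pairwise (· < ·) ℓ →
      gwF Γ x' n ℓ = (ℓ.map (fun c => 1 + gwS Γ x' n c)).prod
  | [], _ => by simp [gwF_nil]
  | b :: ℓ, hs => by
      have h1 : ∀ c ∈ ℓ, b < c := fun c hc => (List.pairwise_cons.1 hs).1 c hc
      have h2 : b ∉ ℓ := fun hc => lt_irrefl b (h1 b hc)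
      rw [gwF_cons Γ x' n b ℓ h2 h1 hw,
        gwF_sorted n hw ℓ (List.pairwise_cons.1 hs).2]
      simp

theorem gwS_zero (A : 𝒜) : gwS Γ x' 0 A = 0 := by
  rw [gwS]
  refine ENNReal.tsum_eq_zero.2 fun τ => ?_
  rcases τ with ⟨a, c⟩
  rw [if_neg]
  rintro ⟨-, -, hd⟩
  rw [WTree.depth] at hd
  omega

theorem gwS_succ (n : ℕ) (A : 𝒜) (hw : ∀ a, 0 ≤ x' a) :
    gwS Γ x' (n + 1) A =
      ENNReal.ofReal (x' A) * gwF Γ x' n (Finset.sort (insert A (Γ A)) (· ≤ ·)) := by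
  rw [gwS, gw_tsum_wtree]
  rw [tsum_eq_single A (by
    intro a ha
    refine ENNReal.tsum_eq_zero.2 fun c => ?_
    rw [if_neg]
    rintro ⟨-, hl, -⟩
    exact ha (by simpa [WTree.label] using hl))]
  rw [gwF, ← ENNReal.tsum_mul_left]
  refine tsum_congr fun c => ?_
  have hiff : (WTree.Proper Γ (WTree.node A c) ∧ (WTree.node A c).label = A ∧
      (WTree.node A c).depth ≤ n + 1) ↔ gwC Γ n (Finset.sort (insert A (Γ A)) (· ≤ ·)) c := by
    constructor
    · rintro ⟨hp, -, hd⟩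
      cases hp with
      | node a c hch hmem hpr =>
        rw [WTree.depth] at hd
        have hd' : WTree.depthList c ≤ n := by omega
        exact ⟨hch, fun t ht => (Finset.mem_sort _).2 (hmem t ht),
          fun t ht => ⟨hpr t ht, WTree.depthList_le.1 hd' t ht⟩⟩
    · rintro ⟨hch, hmem, hpr⟩
      refine ⟨WTree.Proper.node A c hch
        (fun t ht => (Finset.mem_sort _).1 (hmem t ht)) (fun t ht => (hpr t ht).1),
        rfl, ?_⟩
      rw [WTree.depth]
      have : WTree.depthList c ≤ n := WTree.depthList_le.2 fun t ht => (hpr t ht).2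
      omega
  by_cases hc : gwC Γ n (Finset.sort (insert A (Γ A)) (· ≤ ·)) c
  · rw [if_pos (hiff.2 hc), if_pos hc, WTree.weight,
      ENNReal.ofReal_mul (hw A)]
  · rw [if_neg (fun h => hc (hiff.1 h)), if_neg hc, mul_zero]

end More

theorem gw_list_prod_le {β : Type} (f g : β → ℝ≥0∞) :
    ∀ ℓ : List β, (∀ c ∈ ℓ, f c ≤ g c) → (ℓ.map f).prod ≤ (ℓ.map g).prod
  | [], _ => le_refl _
  | b :: ℓ, h => by
      simp only [List.map_cons, List.prod_cons]
      exact mul_le_mul' (h b (by simp))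
        (gw_list_prod_le f g ℓ fun c hc => h c (by simp [hc]))

theorem gw_list_prod_ofReal {β : Type} (f : β → ℝ) :
    ∀ ℓ : List β, (∀ c ∈ ℓ, 0 ≤ f c) →
      (ℓ.map fun c => ENNReal.ofReal (f c)).prod = ENNReal.ofReal (ℓ.map f).prod
  | [], _ => by simp
  | b :: ℓ, h => by
      have hnn : 0 ≤ (ℓ.map f).prod := by
        refine List.prod_nonneg fun a ha => ?_
        rcases List.mem_map.1 ha with ⟨c, hc, rfl⟩
        exact h c (by simp [hc])
      simp only [List.map_cons, List.prod_cons]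
      rw [gw_list_prod_ofReal f ℓ (fun c hc => h c (by simp [hc])),
        ENNReal.ofReal_mul (h b (by simp))]

theorem gw_main {𝒜 : Type} [LinearOrder 𝒜]
    (Γ : 𝒜 → Finset 𝒜) (hirr : ∀ A, A ∉ Γ A)
    (x : 𝒜 → ℝ) (hx : ∀ A, x A ∈ Set.Ioo (0 : ℝ) 1)
    (x' : 𝒜 → ℝ) (hx' : ∀ A, x' A = x A * ∏ B ∈ Γ A, (1 - x B)) :
    ∀ (n : ℕ) (A : 𝒜), gwS Γ x' n A ≤ ENNReal.ofReal (x A / (1 - x A)) := by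
  have hw : ∀ a, 0 ≤ x' a := fun a => by
    rw [hx' a]
    exact mul_nonneg (le_of_lt (hx a).1)
      (Finset.prod_nonneg fun B _ => by linarith [(hx B).2])
  intro n
  induction n with
  | zero => intro A; rw [gwS_zero]; exact zero_le
  | succ n ih =>
    intro A
    have h1A : (0 : ℝ) < 1 - x A := by linarith [(hx A).2]
    rw [gwS_succ Γ x' n A hw,
      gwF_sorted Γ x' n hw _ (Finset.sortedLT_sort (insert A (Γ A))).pairwise]
    set ℓ := Finset.sort (insert A (Γ A)) (· ≤ ·) with hℓ
    have hpt : ∀ c ∈ ℓ, 1 + gwS Γ x' n c ≤ ENNReal.ofReal ((1 - x c)⁻¹) := by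
      intro c _
      have h1c : (0 : ℝ) < 1 - x c := by linarith [(hx c).2]
      have : ENNReal.ofReal ((1 - x c)⁻¹) = 1 + ENNReal.ofReal (x c / (1 - x c)) := by
        rw [← ENNReal.ofReal_one,
          ← ENNReal.ofReal_add (by norm_num)
            (div_nonneg (le_of_lt (hx c).1) (le_of_lt h1c))]
        congr 1
        field_simp
        ring
      rw [this]
      exact add_le_add_right (ih c) 1
    calc ENNReal.ofReal (x' A) * (ℓ.map fun c => 1 + gwS Γ x' n c).prod
        ≤ ENNReal.ofReal (x' A) * (ℓ.map fun c => ENNReal.ofReal ((1 - x c)⁻¹)).prod :=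
          mul_le_mul_right (gw_list_prod_le _ _ ℓ hpt) _
      _ = ENNReal.ofReal (x' A * (ℓ.map fun c => (1 - x c)⁻¹).prod) := by
          rw [gw_list_prod_ofReal _ ℓ (fun c _ => by
            have h1c : (0 : ℝ) < 1 - x c := by linarith [(hx c).2]
            positivity), ← ENNReal.ofReal_mul (hw A)]
      _ = ENNReal.ofReal (x A / (1 - x A)) := by
          congr 1
          have hlist : ∀ g : 𝒜 → ℝ,
              (ℓ.map g).prod = ∏ c ∈ insert A (Γ A), g c := by
            intro g
            have h1 : (↑ℓ : Multiset 𝒜) = (insert A (Γ A)).val :=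
              Finset.sort_eq _ _
            rw [show (∏ c ∈ insert A (Γ A), g c) =
              ((insert A (Γ A)).val.map g).prod from rfl, ← h1]
            simp
          rw [hlist, Finset.prod_insert (hirr A), hx' A, Finset.prod_inv_distrib]
          have hQ : (0 : ℝ) < ∏ B ∈ Γ A, (1 - x B) :=
            Finset.prod_pos fun B _ => by linarith [(hx B).2]
          field_simp


/-- **Galton–Watson bound for witness trees (Moser–Tardos).**
For a finite set `𝒜` with a symmetric irreflexive neighborhood relation `Γ`,
`x : 𝒜 → (0,1)` and `x' B = x B · ∏_{C ∈ Γ B} (1 - x C)`, the sum over all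
proper witness trees rooted at `A` of the weight `∏_{v ∈ V(τ)} x' ([v])` is at
most `x A / (1 - x A)`. -/
theorem galton_watson_witness_tree_bound
    (𝒜 : Type) [Fintype 𝒜] [LinearOrder 𝒜]
    (Γ : 𝒜 → Finset 𝒜) (hirr : ∀ A, A ∉ Γ A)
    (hsym : ∀ A B, B ∈ Γ A ↔ A ∈ Γ B)
    (x : 𝒜 → ℝ) (hx : ∀ A, x A ∈ Set.Ioo (0 : ℝ) 1)
    (x' : 𝒜 → ℝ) (hx' : ∀ A, x' A = x A * ∏ B ∈ Γ A, (1 - x B))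
    (A : 𝒜) :
    ∑' τ : {τ : WTree 𝒜 // WTree.Proper Γ τ ∧ τ.label = A},
        ENNReal.ofReal (WTree.weight x' τ.1)
      ≤ ENNReal.ofReal (x A / (1 - x A)) := by
  rw [ENNReal.tsum_eq_iSup_sum]
  refine iSup_le fun s => ?_
  set n := s.sup (fun τ => τ.1.depth) with hn
  calc ∑ τ ∈ s, ENNReal.ofReal (WTree.weight x' τ.1)
      = ∑ τ ∈ s, (if WTree.Proper Γ τ.1 ∧ τ.1.label = A ∧ τ.1.depth ≤ n
          then ENNReal.ofReal (τ.1.weight x') else 0) := by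
        refine Finset.sum_congr rfl fun τ hτ => ?_
        rw [if_pos ⟨τ.2.1, τ.2.2, Finset.le_sup (f := fun τ => τ.1.depth) hτ⟩]
    _ = ∑ t ∈ s.image Subtype.val, (if WTree.Proper Γ t ∧ t.label = A ∧ t.depth ≤ n
          then ENNReal.ofReal (t.weight x') else 0) :=
        (Finset.sum_image
          (f := fun t => if WTree.Proper Γ t ∧ t.label = A ∧ t.depth ≤ n
            then ENNReal.ofReal (t.weight x') else 0)
          (fun a _ b _ h => Subtype.ext h)).symm
    _ ≤ gwS Γ x' n A := by
        rw [gwS]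
        exact ENNReal.sum_le_tsum _
    _ ≤ ENNReal.ofReal (x A / (1 - x A)) := gw_main Γ hirr x hx x' hx' n A
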